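/- For a 2-dimensional system (qubit) with non-degenerate Hamiltonian ε₁ < ε₂, every passive state is completely passive. Concretely: if p₁ ≥ p₂ > 0 with p₁ + p₂ = 1, then there exists β ≥ 0 with p_i = e^{−βε_i}/(e^{−βε₁} + e^{−βε₂}) for i = 1, 2. -/

import Mathlib

/-- Every passive qubit state is completely passive: if `p₁ ≥ p₂ > 0`, `p₁ + p₂ = 1`
and `ε₁ < ε₂`, then the state is Gibbsian for some `β ≥ 0`. -/
theorem stmt10 (ε₁ ε₂ p₁ p₂ : ℝ) (hε : ε₁ < ε₂)
    (hp : p₁ ≥ p₂) (hp2 : 0 < p₂) (hsum : p₁ + p₂ = 1) :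
    ∃ β : ℝ, 0 ≤ β ∧
      p₁ = Real.exp (-β * ε₁) / (Real.exp (-β * ε₁) + Real.exp (-β * ε₂)) ∧
      p₂ = Real.exp (-β * ε₂) / (Real.exp (-β * ε₁) + Real.exp (-β * ε₂)) := by
  have hp1 : 0 < p₁ := lt_of_lt_of_le hp2 hp
  have hd : (0:ℝ) < ε₂ - ε₁ := by linarith
  set β : ℝ := Real.log (p₁ / p₂) / (ε₂ - ε₁) with hβ
  have hr : (1:ℝ) ≤ p₁ / p₂ := (one_le_div hp2).mpr hp
  have hβ0 : 0 ≤ β := div_nonneg (Real.log_nonneg hr) hd.le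
  have hkey : Real.exp (-β * ε₂) = Real.exp (-β * ε₁) * (p₂ / p₁) := by
    have h1 : -β * ε₂ = -β * ε₁ + (-(β * (ε₂ - ε₁))) := by ring
    have h2 : β * (ε₂ - ε₁) = Real.log (p₁ / p₂) := by
      rw [hβ]; field_simp
    rw [h1, Real.exp_add, h2, Real.exp_neg, Real.exp_log (by positivity)]
    rw [inv_div]
  have he1 : 0 < Real.exp (-β * ε₁) := Real.exp_pos _
  have hden : Real.exp (-β * ε₁) + Real.exp (-β * ε₂)
      = Real.exp (-β * ε₁) / p₁ := by
    rw [hkey]; field_simp; linear_combination hsum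
  refine ⟨β, hβ0, ?_, ?_⟩
  · rw [hden]; field_simp
  · rw [hden, hkey]; field_simp
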